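/- Let 1 ≤ i ≤ m−1 with v_2(m) < v_2(i). Then there exist a ∈ F_{2^n} with a^{2^m} ≠ a (i.e. a ∉ K_m) and y ∈ F_{2^n}, y ≠ 0, such that a^{2^i}·y^{2^{2i}} + (a + a^{2^m})^{2^i}·y^{2^{m+i}} + a·y = 0. -/

import Mathlib

open scoped Classical BigOperators

noncomputable section

/-- The finite field with `2^k` elements. -/
abbrev GF (k : ℕ) := GaloisField 2 k

noncomputable instance (k : ℕ) : Fintype (GF k) := Fintype.ofFinite _

/-- The absolute trace `Tr_{2^k/2}`, viewed as an element of `GF k`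
(its values lie in the prime field `{0,1}`). -/
def atr (k : ℕ) (x : GF k) : GF k := ∑ j ∈ Finset.range k, x ^ 2 ^ j

/-- `(-1)^b` for `b ∈ {0,1} ⊆ GF k`. -/
def chi (k : ℕ) (x : GF k) : ℤ := if x = 0 then 1 else -1

/-- The Walsh transform of a Boolean-valued function `f` on `GF k`
(`f` takes values in the prime field `{0,1}`). -/
def walsh (k : ℕ) (f : GF k → GF k) (ω : GF k) : ℤ :=
  ∑ x : GF k, chi k (f x + atr k (ω * x))

/-- The trace `Tr_{2^m/2}` of the subfield `K_m ⊆ GF (2*m)`, viewed inside `GF (2*m)`. -/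
def trKm (m : ℕ) (x : GF (2*m)) : GF (2*m) := ∑ j ∈ Finset.range m, x ^ 2 ^ j

/-- The subfield `K_m = {x : x^(2^m) = x}` of `GF (2*m)`, as a finset. -/
def Km (m : ℕ) : Finset (GF (2*m)) := Finset.univ.filter (fun x => x ^ 2 ^ m = x)

/-- `max_{a ≠ 0, ω} |W_{F_a}(ω)|` for a vectorial function `F` on `GF (2*m)`. -/
def maxAbsW (m : ℕ) (F : GF (2*m) → GF (2*m)) : ℕ :=
  Finset.sup ((Finset.univ.filter (fun a : GF (2*m) => a ≠ 0)) ×ˢ (Finset.univ : Finset (GF (2*m))))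
    (fun p => (walsh (2*m) (fun x => atr (2*m) (p.1 * F x)) p.2).natAbs)

/-- The nonlinearity `N_F = 2^(n-1) - (1/2) max_{a ≠ 0, ω} |W_{F_a}(ω)|`, `n = 2m`. -/
def nlin (m : ℕ) (F : GF (2*m) → GF (2*m)) : ℚ :=
  2 ^ (2*m - 1) - (maxAbsW m F : ℚ) / 2



namespace Stmt17Aux

open Finset

lemma geom_sum_mul_two_pow (c k : ℕ) :
    (∑ j ∈ Finset.range k, 2 ^ (c * j)) * (2 ^ c - 1) = 2 ^ (c * k) - 1 := by
  induction k with
  | zero => simp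
  | succ k ih =>
    rw [Finset.sum_range_succ, add_mul, ih]
    have h1 : 1 ≤ 2 ^ (c * k) := Nat.one_le_two_pow
    have h2 : 1 ≤ 2 ^ c := Nat.one_le_two_pow
    have h3 : 2 ^ (c * (k + 1)) = 2 ^ (c * k) * 2 ^ c := by
      rw [← pow_add]; ring_nf
    have h4 : 1 ≤ 2 ^ (c * k) * 2 ^ c := Nat.one_le_iff_ne_zero.2 (by positivity)
    zify [h1, h2, h4, Nat.one_le_two_pow] at *
    rw [h3]
    push_cast
    ring

lemma two_pow_sub_one_dvd {c k : ℕ} (h : c ∣ k) : (2 ^ c - 1) ∣ (2 ^ k - 1) := by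
  obtain ⟨t, rfl⟩ := h
  exact ⟨∑ j ∈ Finset.range t, 2 ^ (c * j), by rw [← geom_sum_mul_two_pow c t, mul_comm]⟩

lemma digits_unique (B : ℕ) (hB : 0 < B) :
    ∀ (r : ℕ) (d e : ℕ → ℕ), (∀ j, j < r → d j < B) → (∀ j, j < r → e j < B) →
      (∑ j ∈ Finset.range r, d j * B ^ j) = (∑ j ∈ Finset.range r, e j * B ^ j) →
      ∀ j, j < r → d j = e j := by
  intro r
  induction r with
  | zero => intro d e _ _ _ j hj; omega
  | succ r ih =>
    intro d e hd he hsum j hj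
    rw [Finset.sum_range_succ', Finset.sum_range_succ'] at hsum
    simp only [pow_zero, mul_one] at hsum
    have hrw : ∀ f : ℕ → ℕ, ∑ j ∈ Finset.range r, f (j+1) * B ^ (j+1)
        = B * ∑ j ∈ Finset.range r, f (j+1) * B ^ j := by
      intro f
      rw [Finset.mul_sum]
      apply Finset.sum_congr rfl
      intro x _
      rw [pow_succ]
      ring
    rw [hrw d, hrw e] at hsum
    have hd0 : d 0 < B := hd 0 (by omega)
    have he0 : e 0 < B := he 0 (by omega)
    have h0 : d 0 = e 0 := by
      have h1 : (B * ∑ j ∈ Finset.range r, d (j+1) * B ^ j + d 0) % B = d 0 := by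
        rw [Nat.mul_add_mod]; exact Nat.mod_eq_of_lt hd0
      have h2 : (B * ∑ j ∈ Finset.range r, e (j+1) * B ^ j + e 0) % B = e 0 := by
        rw [Nat.mul_add_mod]; exact Nat.mod_eq_of_lt he0
      rw [← h1, ← h2, hsum]
    have hS : (∑ j ∈ Finset.range r, d (j+1) * B ^ j) = ∑ j ∈ Finset.range r, e (j+1) * B ^ j := by
      have := hsum
      rw [h0] at this
      have := Nat.add_right_cancel this
      exact Nat.eq_of_mul_eq_mul_left hB this
    rcases Nat.eq_zero_or_pos j with hj0 | hjpos
    · rw [hj0]; exact h0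
    · obtain ⟨j', rfl⟩ : ∃ j', j = j' + 1 := ⟨j - 1, by omega⟩
      exact ih (fun t => d (t+1)) (fun t => e (t+1))
        (fun t ht => hd (t+1) (by omega)) (fun t ht => he (t+1) (by omega)) hS j' (by omega)

lemma bits_inj {G : ℕ} {A B : Finset ℕ} (hA : A ⊆ Finset.range G) (hB : B ⊆ Finset.range G)
    (h : ∑ t ∈ A, 2 ^ t = ∑ t ∈ B, 2 ^ t) : A = B := by
  have key : ∀ C : Finset ℕ, C ⊆ Finset.range G →
      ∑ t ∈ C, 2 ^ t = ∑ j ∈ Finset.range G, (if j ∈ C then 1 else 0) * 2 ^ j := by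
    intro C hC
    have h1 : ∀ j : ℕ, (if j ∈ C then 1 else 0) * 2 ^ j = if j ∈ C then 2 ^ j else 0 := by
      intro j; split <;> simp
    simp only [h1]
    rw [← Finset.sum_filter, Finset.filter_mem_eq_inter, Finset.inter_eq_right.mpr hC]
  have h2 := h
  rw [key A hA, key B hB] at h2
  have hdig := digits_unique 2 (by norm_num) G (fun j => if j ∈ A then 1 else 0)
    (fun j => if j ∈ B then 1 else 0) (fun j _ => by split <;> omega)
    (fun j _ => by split <;> omega) h2
  ext a
  by_cases ha : a < G
  · have := hdig a ha
    by_cases haA : a ∈ A <;> by_cases haB : a ∈ B <;> simp [haA, haB] at this ⊢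
  · constructor
    · intro haA; exact absurd (Finset.mem_range.1 (hA haA)) ha
    · intro haB; exact absurd (Finset.mem_range.1 (hB haB)) ha

lemma key_not_dvd (g r : ℕ) (hg : 1 ≤ g) (hr : 2 ≤ r) (f : ℕ → ℕ) (hf : ∀ t, t < g → f t < r) :
    ¬ (2 ^ (g * r) - 1) ∣ (2 ^ g - 1) * ∑ t ∈ Finset.range g, 2 ^ (g * f t + t) := by
  intro hdvd
  set T := ∑ t ∈ Finset.range g, 2 ^ (g * f t + t) with hT
  set Q := ∑ j ∈ Finset.range r, 2 ^ (g * j) with hQ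
  have hQmul : (2 ^ g - 1) * Q = 2 ^ (g * r) - 1 := by
    rw [mul_comm]; exact geom_sum_mul_two_pow g r
  have hg1 : 1 ≤ 2 ^ g - 1 := by
    have : 2 ≤ 2 ^ g := by
      calc 2 = 2 ^ 1 := (pow_one 2).symm
      _ ≤ 2 ^ g := Nat.pow_le_pow_right (by norm_num) hg
    omega
  have hQdvd : Q ∣ T := by
    rw [← hQmul] at hdvd
    exact (mul_dvd_mul_iff_left (by omega : (2:ℕ) ^ g - 1 ≠ 0)).mp hdvd
  obtain ⟨c, hc⟩ := hQdvd
  -- bounds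
  have hQge : 2 ^ (g * (r - 1)) ≤ Q := by
    apply Finset.single_le_sum (f := fun j => 2 ^ (g * j)) (fun _ _ => Nat.zero_le _)
    exact Finset.mem_range.2 (by omega)
  have hTle : T < 2 ^ (g * r) := by
    have h1 : T ≤ ∑ t ∈ Finset.range g, 2 ^ (g * (r - 1) + t) := by
      apply Finset.sum_le_sum
      intro t ht
      apply Nat.pow_le_pow_right (by norm_num)
      have := hf t (Finset.mem_range.1 ht)
      have : f t ≤ r - 1 := by omega
      have := Nat.mul_le_mul_left g this
      omega
    have h2 : ∑ t ∈ Finset.range g, 2 ^ (g * (r - 1) + t)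
        = 2 ^ (g * (r - 1)) * ∑ t ∈ Finset.range g, 2 ^ t := by
      rw [Finset.mul_sum]
      exact Finset.sum_congr rfl (fun t _ => by rw [pow_add])
    have h3 : (∑ t ∈ Finset.range g, 2 ^ t) = 2 ^ g - 1 := by
      have := geom_sum_mul_two_pow 1 g
      simp only [one_mul, pow_one] at this
      omega
    have h4 : 2 ^ (g * (r - 1)) * (2 ^ g - 1) < 2 ^ (g * (r - 1)) * 2 ^ g := by
      apply Nat.mul_lt_mul_of_le_of_lt (le_refl _) (by omega)
      positivity
    have h5 : 2 ^ (g * (r - 1)) * 2 ^ g = 2 ^ (g * r) := by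
      rw [← pow_add]
      congr 1
      have hr1 : r - 1 + 1 = r := by omega
      calc g * (r - 1) + g = g * (r - 1 + 1) := by rw [Nat.mul_succ]
      _ = g * r := by rw [hr1]
    rw [h3] at h2
    omega
  have hTpos : 0 < T := by
    apply Finset.sum_pos (fun t _ => by positivity)
    exact ⟨0, Finset.mem_range.2 (by omega)⟩
  have hQpos : 0 < Q := by
    have : (0:ℕ) < 2 ^ (g * (r-1)) := by positivity
    omega
  have hcpos : 0 < c := by
    rcases Nat.eq_zero_or_pos c with h | h
    · rw [h, mul_zero] at hc; omega
    · exact h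
  have hclt : c < 2 ^ g := by
    by_contra hge
    push_neg at hge
    have : Q * 2 ^ g ≤ Q * c := Nat.mul_le_mul_left Q hge
    have h5 : 2 ^ (g * (r - 1)) * 2 ^ g = 2 ^ (g * r) := by
      rw [← pow_add]
      congr 1
      have hr1 : r - 1 + 1 = r := by omega
      calc g * (r - 1) + g = g * (r - 1 + 1) := by rw [Nat.mul_succ]
      _ = g * r := by rw [hr1]
    have : 2 ^ (g * r) ≤ Q * 2 ^ g := by
      rw [← h5]
      exact Nat.mul_le_mul_right _ hQge
    omega
  -- regroup T by fibers of f
  set cd : ℕ → ℕ := fun j => ∑ t ∈ (Finset.range g).filter (fun t => f t = j), 2 ^ t with hcd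
  have hregroup : T = ∑ j ∈ Finset.range r, cd j * (2 ^ g) ^ j := by
    rw [hT, ← Finset.sum_fiberwise_of_maps_to (g := f) (t := Finset.range r)
      (fun t ht => Finset.mem_range.2 (hf t (Finset.mem_range.1 ht))) (fun t => 2 ^ (g * f t + t))]
    apply Finset.sum_congr rfl
    intro j _
    rw [hcd, Finset.sum_mul]
    apply Finset.sum_congr rfl
    intro t ht
    obtain ⟨ht1, ht2⟩ := Finset.mem_filter.1 ht
    rw [ht2, pow_add, ← pow_mul]
    ring
  have hcQ : Q * c = ∑ j ∈ Finset.range r, c * (2 ^ g) ^ j := by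
    rw [hQ, Finset.sum_mul]
    apply Finset.sum_congr rfl
    intro j _
    rw [← pow_mul]
    ring
  have hdig := digits_unique (2 ^ g) (by positivity) r cd (fun _ => c)
    (fun j _ => by
      have h1 : cd j ≤ ∑ t ∈ Finset.range g, 2 ^ t :=
        Finset.sum_le_sum_of_subset (Finset.filter_subset _ _)
      have h3 : (∑ t ∈ Finset.range g, 2 ^ t) = 2 ^ g - 1 := by
        have := geom_sum_mul_two_pow 1 g
        simp only [one_mul, pow_one] at this
        omega
      omega)
    (fun j _ => hclt)
    (by rw [← hregroup, hc, ← hcQ, mul_comm])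
  have hc0 : cd 0 = c := hdig 0 (by omega)
  have hc1 : cd 1 = c := hdig 1 (by omega)
  have hsets : (Finset.range g).filter (fun t => f t = 0)
      = (Finset.range g).filter (fun t => f t = 1) := by
    apply bits_inj (G := g) (Finset.filter_subset _ _) (Finset.filter_subset _ _)
    exact hc0.trans hc1.symm
  have hne : ((Finset.range g).filter (fun t => f t = 0)).Nonempty := by
    rw [Finset.nonempty_iff_ne_empty]
    intro hempty
    have : cd 0 = 0 := by rw [hcd]; simp [hempty]
    omega
  obtain ⟨t, ht⟩ := hne
  have ht1 : f t = 0 := (Finset.mem_filter.1 ht).2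
  have ht' := ht
  rw [hsets] at ht'
  have ht2 : f t = 1 := (Finset.mem_filter.1 ht').2
  omega

lemma bezout_nat (i m : ℕ) (hi : 0 < i) (hm : 0 < m) :
    ∃ a b : ℕ, 0 < a ∧ a * i = Nat.gcd i m + b * m := by
  have hb := Nat.gcd_eq_gcd_ab i m
  set x := Nat.gcdA i m with hx
  set y := Nat.gcdB i m with hy
  set t : ℤ := |x| + 1 with ht
  have hA : 0 < x + t * m := by
    have h1 : (1:ℤ) ≤ m := by exact_mod_cast hm
    nlinarith [abs_nonneg x, neg_abs_le x]
  have hglei : (Nat.gcd i m : ℤ) ≤ i := by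
    exact_mod_cast Nat.le_of_dvd hi (Nat.gcd_dvd_left i m)
  have hkey : (x + t * m) * i - (t * i - y) * m = Nat.gcd i m := by
    rw [hb]; ring
  have hB : 0 ≤ t * i - y := by
    have h2 : (t * i - y) * m = (x + t * m) * i - Nat.gcd i m := by omega
    have h3 : (1:ℤ) ≤ x + t * m := hA
    have h4 : (0:ℤ) ≤ (x + t * m) * i - Nat.gcd i m := by
      have : (i:ℤ) ≤ (x + t * m) * i := by
        nlinarith [hA, (by exact_mod_cast hi : (1:ℤ) ≤ i)]
      omega
    have hm' : (0:ℤ) < m := by exact_mod_cast hm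
    nlinarith [h2, h4, hm']
  refine ⟨(x + t * m).toNat, (t * i - y).toNat, ?_, ?_⟩
  · omega
  · zify
    rw [Int.toNat_of_nonneg hA.le, Int.toNat_of_nonneg hB]
    omega

end Stmt17Aux

namespace Stmt17Aux

open Finset

variable {m : ℕ}

lemma two_pow_modeq (M : ℕ) (hM : 0 < M) (s : ℕ) :
    (2:ℕ) ^ s ≡ 2 ^ (s % M) [MOD 2 ^ M - 1] := by
  conv_lhs => rw [← Nat.div_add_mod s M]
  rw [pow_add, pow_mul]
  have h1 : (1:ℕ) ≡ 2 ^ M [MOD 2 ^ M - 1] :=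
    (Nat.modEq_iff_dvd' Nat.one_le_two_pow).2 dvd_rfl
  calc ((2:ℕ) ^ M) ^ (s / M) * 2 ^ (s % M)
      ≡ 1 ^ (s / M) * 2 ^ (s % M) [MOD 2 ^ M - 1] :=
        Nat.ModEq.mul_right _ ((h1.symm).pow _)
  _ = 2 ^ (s % M) := by rw [one_pow, one_mul]

lemma exp_mod_eq (g r i' t j : ℕ) (hg : 0 < g) (hr : 0 < r) (ht : t < g) :
    (g * i' * j + t) % (g * r) = g * ((i' * j) % r) + t := by
  have h1 : g * i' * j + t = (g * ((i' * j) % r) + t) + (g * r) * ((i' * j) / r) := by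
    rw [mul_assoc]
    conv_lhs => rw [← Nat.mod_add_div (i' * j) r]
    ring
  rw [h1, Nat.add_mul_mod_self_left]
  apply Nat.mod_eq_of_lt
  have h2 : (i' * j) % r ≤ r - 1 := by
    have := Nat.mod_lt (i' * j) hr
    omega
  have h3 : g * ((i' * j) % r) ≤ g * (r - 1) := Nat.mul_le_mul_left _ h2
  have h4 : g * (r - 1) + g ≤ g * r := by
    have h5 : g * (r - 1) + g = g * (r - 1 + 1) := by rw [Nat.mul_succ]
    rw [h5]
    apply Nat.mul_le_mul_left
    omega
  omega

lemma modeq_sum {α : Type*} {s : Finset α} {h1 h2 : α → ℕ} {n : ℕ}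
    (H : ∀ x ∈ s, h1 x ≡ h2 x [MOD n]) :
    (∑ x ∈ s, h1 x) ≡ ∑ x ∈ s, h2 x [MOD n] := by
  classical
  induction s using Finset.induction with
  | empty => simp [Nat.ModEq.refl]
  | @insert a s ha ih =>
    rw [Finset.sum_insert ha, Finset.sum_insert ha]
    exact Nat.ModEq.add (H _ (Finset.mem_insert_self _ _))
      (ih fun x hx' => H x (Finset.mem_insert_of_mem hx'))

lemma card_GF (hm : m ≠ 0) : Fintype.card (GF (2*m)) = 2 ^ (2*m) := by
  rw [← Nat.card_eq_fintype_card, GaloisField.card 2 (2*m) (by omega)]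

lemma card_GF_units (hm : m ≠ 0) : Fintype.card (GF (2*m))ˣ = 2 ^ (2*m) - 1 := by
  rw [Fintype.card_units, card_GF hm]

lemma exists_unit_order (hm : m ≠ 0) {d : ℕ} (hd : 0 < d) (hdvd : d ∣ 2 ^ (2*m) - 1) :
    ∃ ζ : (GF (2*m))ˣ, orderOf ζ = d := by
  obtain ⟨ρ, hρ⟩ := IsCyclic.exists_generator (α := (GF (2*m))ˣ)
  have hord : orderOf ρ = 2 ^ (2*m) - 1 := by
    rw [orderOf_eq_card_of_forall_mem_zpowers hρ, Nat.card_eq_fintype_card, card_GF_units hm]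
  refine ⟨ρ ^ ((2 ^ (2*m) - 1) / d), ?_⟩
  have h2 : 2 ≤ 2 ^ (2*m) := by
    calc 2 = 2 ^ 1 := (pow_one 2).symm
    _ ≤ 2 ^ (2*m) := Nat.pow_le_pow_right (by norm_num) (by omega)
  rw [orderOf_pow, hord, Nat.gcd_eq_right (Nat.div_dvd_of_dvd hdvd),
    Nat.div_div_self hdvd (by omega)]

lemma iter_pow {x : GF (2*m)} {c : ℕ} (hx : x ^ 2 ^ c = x) (k : ℕ) : x ^ 2 ^ (c * k) = x := by
  induction k with
  | zero => simp
  | succ k ih =>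
    have h1 : 2 ^ (c * (k+1)) = 2 ^ (c * k) * 2 ^ c := by rw [← pow_add, Nat.mul_succ]
    rw [h1, pow_mul, ih, hx]

lemma pow_gcd_fix {x : GF (2*m)} {a b i g : ℕ} (hab : a * i = g + b * m)
    (hxi : x ^ 2 ^ i = x) (hxm : x ^ 2 ^ m = x) : x ^ 2 ^ g = x := by
  have h1 : x ^ 2 ^ (i * a) = x := iter_pow hxi a
  have h2 : x ^ 2 ^ (m * b) = x := iter_pow hxm b
  have hexp : m * b + g = i * a := by
    rw [Nat.mul_comm m b, Nat.mul_comm i a]; omega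
  calc x ^ 2 ^ g = (x ^ 2 ^ (m * b)) ^ 2 ^ g := by rw [h2]
  _ = x ^ (2 ^ (m * b) * 2 ^ g) := (pow_mul x _ _).symm
  _ = x ^ 2 ^ (m * b + g) := by rw [pow_add]
  _ = x ^ 2 ^ (i * a) := by rw [hexp]
  _ = x := h1

lemma sum_pow_two_pow {α : Type*} (s : Finset α) (h : α → GF (2*m)) (c : ℕ) :
    (∑ x ∈ s, h x) ^ 2 ^ c = ∑ x ∈ s, (h x) ^ 2 ^ c :=
  map_sum (iterateFrobenius (GF (2*m)) 2 c) h s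

lemma Kf_eq (hm : m ≠ 0) :
    (univ.filter fun x : GF (2*m) => x ^ 2 ^ m = x)
      = insert (0 : GF (2*m)) (univ.filter fun x : GF (2*m) => x ^ (2 ^ m - 1) = 1) := by
  have h2m : 1 ≤ 2 ^ m := Nat.one_le_two_pow
  ext x
  simp only [Finset.mem_filter, Finset.mem_univ, true_and, Finset.mem_insert]
  constructor
  · intro hx
    rcases eq_or_ne x 0 with h0 | h0
    · exact Or.inl h0
    · right
      have : x ^ (2 ^ m - 1) * x = x := by
        rw [← pow_succ]
        have : 2 ^ m - 1 + 1 = 2 ^ m := by omega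
        rw [this]; exact hx
      have hc : x ^ (2 ^ m - 1) * x = 1 * x := by rw [one_mul]; exact this
      exact mul_right_cancel₀ h0 hc
  · intro hx
    rcases hx with h0 | h1
    · rw [h0]; exact zero_pow (by positivity)
    · calc x ^ 2 ^ m = x ^ (2 ^ m - 1 + 1) := by congr 1; omega
      _ = x ^ (2 ^ m - 1) * x := by rw [pow_succ]
      _ = x := by rw [h1, one_mul]

lemma zero_not_mem_Kf' (hm : m ≠ 0) :
    (0 : GF (2*m)) ∉ (univ.filter fun x : GF (2*m) => x ^ (2 ^ m - 1) = 1) := by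
  simp only [Finset.mem_filter, Finset.mem_univ, true_and]
  have h2m : 2 ≤ 2 ^ m := by
    calc 2 = 2^1 := (pow_one 2).symm
    _ ≤ 2 ^ m := Nat.pow_le_pow_right (by norm_num) (by omega)
  rw [zero_pow (by omega)]
  exact zero_ne_one

lemma card_Kf (hm : m ≠ 0) (ζ : (GF (2*m))ˣ) (hζ : orderOf ζ = 2 ^ m - 1) :
    (univ.filter fun x : GF (2*m) => x ^ 2 ^ m = x).card = 2 ^ m := by
  have h2m : 2 ≤ 2 ^ m := by
    calc 2 = 2 ^ 1 := (pow_one 2).symm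
    _ ≤ 2 ^ m := Nat.pow_le_pow_right (by norm_num) (by omega)
  -- upper bound via polynomial roots
  set P : Polynomial (GF (2*m)) := Polynomial.X ^ (2 ^ m) - Polynomial.X with hP
  have hdeg : P.natDegree = 2 ^ m := by
    rw [hP, Polynomial.natDegree_sub_eq_left_of_natDegree_lt, Polynomial.natDegree_X_pow]
    rw [Polynomial.natDegree_X_pow, Polynomial.natDegree_X]
    omega
  have hPne : P ≠ 0 := by
    intro h0
    rw [h0, Polynomial.natDegree_zero] at hdeg
    omega
  have hub : (univ.filter fun x : GF (2*m) => x ^ 2 ^ m = x).card ≤ 2 ^ m := by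
    have hsub : (univ.filter fun x : GF (2*m) => x ^ 2 ^ m = x) ⊆ P.roots.toFinset := by
      intro x hx
      rw [Multiset.mem_toFinset, Polynomial.mem_roots hPne]
      have hx' : x ^ 2 ^ m = x := (Finset.mem_filter.1 hx).2
      simp [Polynomial.IsRoot, hP, sub_eq_zero, hx']
    calc (univ.filter fun x : GF (2*m) => x ^ 2 ^ m = x).card
        ≤ P.roots.toFinset.card := Finset.card_le_card hsub
    _ ≤ Multiset.card P.roots := Multiset.toFinset_card_le _
    _ ≤ P.natDegree := Polynomial.card_roots' P
    _ = 2 ^ m := hdeg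
  -- lower bound via powers of ζ
  have hζ1 : ((ζ : (GF (2*m))ˣ) : GF (2*m)) ^ (2 ^ m - 1) = 1 := by
    have := pow_orderOf_eq_one ζ
    rw [hζ] at this
    rw [← Units.val_pow_eq_pow_val, this, Units.val_one]
  have hlb : 2 ^ m ≤ (univ.filter fun x : GF (2*m) => x ^ 2 ^ m = x).card := by
    set im := Finset.image (fun t => ((ζ : (GF (2*m))ˣ) : GF (2*m)) ^ t)
      (Finset.range (2 ^ m - 1)) with him
    have hinj : Set.InjOn (fun t => ((ζ : (GF (2*m))ˣ) : GF (2*m)) ^ t)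
        (Finset.range (2 ^ m - 1)) := by
      intro t1 ht1 t2 ht2 he
      have he' : ζ ^ t1 = ζ ^ t2 := by
        apply Units.ext
        rwa [Units.val_pow_eq_pow_val, Units.val_pow_eq_pow_val]
      have h1 : t1 < orderOf ζ := by
        rw [hζ]; exact Finset.mem_range.1 (by exact_mod_cast ht1)
      have h2 : t2 < orderOf ζ := by
        rw [hζ]; exact Finset.mem_range.1 (by exact_mod_cast ht2)
      exact pow_injOn_Iio_orderOf h1 h2 he'
    have hcard_im : im.card = 2 ^ m - 1 := by
      rw [him, Finset.card_image_of_injOn hinj, Finset.card_range]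
    have h0nim : (0 : GF (2*m)) ∉ im := by
      rw [him]
      simp only [Finset.mem_image, Finset.mem_range]
      rintro ⟨t, -, ht⟩
      have : ((ζ : (GF (2*m))ˣ) : GF (2*m)) ^ t ≠ 0 := by
        rw [← Units.val_pow_eq_pow_val]
        exact Units.ne_zero _
      exact this ht
    have hsub2 : insert (0 : GF (2*m)) im ⊆ (univ.filter fun x : GF (2*m) => x ^ 2 ^ m = x) := by
      intro x hx
      rw [Finset.mem_insert] at hx
      rw [Finset.mem_filter]
      refine ⟨Finset.mem_univ _, ?_⟩
      rcases hx with h0 | him'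
      · rw [h0]; exact zero_pow (by omega)
      · rw [him] at him'
        obtain ⟨t, -, rfl⟩ := Finset.mem_image.1 him'
        calc (((ζ : (GF (2*m))ˣ) : GF (2*m)) ^ t) ^ 2 ^ m
            = (((ζ : (GF (2*m))ˣ) : GF (2*m)) ^ t) ^ (2 ^ m - 1 + 1) := by congr 1; omega
        _ = ((((ζ : (GF (2*m))ˣ) : GF (2*m)) ^ (2 ^ m - 1)) ^ t)
              * ((ζ : (GF (2*m))ˣ) : GF (2*m)) ^ t := by
            rw [pow_succ, pow_right_comm]
        _ = ((ζ : (GF (2*m))ˣ) : GF (2*m)) ^ t := by rw [hζ1, one_pow, one_mul]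
    calc 2 ^ m = (insert (0 : GF (2*m)) im).card := by
          rw [Finset.card_insert_of_notMem h0nim, hcard_im]; omega
    _ ≤ _ := Finset.card_le_card hsub2
  omega

lemma sum_pow_eq_zero (hm : m ≠ 0) (ζ : (GF (2*m))ˣ) (hζ : orderOf ζ = 2 ^ m - 1) {k : ℕ}
    (hk : 0 < k) (hnd : ¬ (2 ^ m - 1) ∣ k) :
    ∑ x ∈ univ.filter (fun x : GF (2*m) => x ^ 2 ^ m = x), x ^ k = 0 := by
  have hζ1 : ((ζ : (GF (2*m))ˣ) : GF (2*m)) ^ (2 ^ m - 1) = 1 := by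
    have := pow_orderOf_eq_one ζ
    rw [hζ] at this
    rw [← Units.val_pow_eq_pow_val, this, Units.val_one]
  rw [Kf_eq hm, Finset.sum_insert (zero_not_mem_Kf' hm), zero_pow hk.ne', zero_add]
  set S := ∑ x ∈ univ.filter (fun x : GF (2*m) => x ^ (2 ^ m - 1) = 1), x ^ k with hS
  have hζk : ((ζ : (GF (2*m))ˣ) : GF (2*m)) ^ k ≠ 1 := by
    intro h
    have hu : ζ ^ k = 1 := by
      apply Units.ext
      rwa [Units.val_pow_eq_pow_val, Units.val_one]
    exact hnd (hζ ▸ orderOf_dvd_of_pow_eq_one hu)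
  have hζne : ((ζ : (GF (2*m))ˣ) : GF (2*m)) ≠ 0 := Units.ne_zero _
  have hre : ∑ x ∈ univ.filter (fun x : GF (2*m) => x ^ (2 ^ m - 1) = 1),
      (((ζ : (GF (2*m))ˣ) : GF (2*m)) * x) ^ k = S := by
    apply Finset.sum_bijective _ (mulLeft_bijective₀ _ hζne)
    · intro x
      simp only [Finset.mem_filter, Finset.mem_univ, true_and]
      constructor
      · intro hx
        rw [mul_pow, hζ1, hx, one_mul]
      · intro hx
        have : (((ζ : (GF (2*m))ˣ) : GF (2*m)) * x) ^ (2 ^ m - 1)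
            = ((ζ : (GF (2*m))ˣ) : GF (2*m)) ^ (2 ^ m - 1) * x ^ (2 ^ m - 1) := mul_pow _ _ _
        rw [hx, hζ1, one_mul] at this
        exact this.symm
    · intro x _
      rfl
  have hstep : ((ζ : (GF (2*m))ˣ) : GF (2*m)) ^ k * S = S := by
    rw [hS, Finset.mul_sum]
    calc ∑ x ∈ univ.filter (fun x : GF (2*m) => x ^ (2 ^ m - 1) = 1),
        ((ζ : (GF (2*m))ˣ) : GF (2*m)) ^ k * x ^ k
        = ∑ x ∈ univ.filter (fun x : GF (2*m) => x ^ (2 ^ m - 1) = 1),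
          (((ζ : (GF (2*m))ˣ) : GF (2*m)) * x) ^ k := by
          apply Finset.sum_congr rfl
          intro x _
          rw [mul_pow]
    _ = S := hre
  have : (((ζ : (GF (2*m))ˣ) : GF (2*m)) ^ k - 1) * S = 0 := by
    rw [sub_mul, one_mul, hstep, sub_self]
  rcases mul_eq_zero.1 this with h | h
  · exact absurd (by rwa [sub_eq_zero] at h) hζk
  · exact h

lemma exists_trace_zero (hm2 : 2 ≤ m) (g r i a b i' : ℕ)
    (hgr : m = g * r) (hg1 : 1 ≤ g) (hr2 : 2 ≤ r) (hii' : i = g * i')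
    (hab : a * i = g + b * m)
    (ζ : (GF (2*m))ˣ) (hζ : orderOf ζ = 2 ^ m - 1) :
    ∃ u : GF (2*m), u ^ 2 ^ m = u ∧ u ≠ 0 ∧
      ∑ j ∈ Finset.range r, (u ^ (2 ^ g - 1)) ^ 2 ^ (i * j) = 0 := by
  by_contra hcon
  push_neg at hcon
  have hm0 : m ≠ 0 := by omega
  have h2g : 2 ≤ 2 ^ g := by
    calc 2 = 2 ^ 1 := (pow_one 2).symm
    _ ≤ 2 ^ g := Nat.pow_le_pow_right (by norm_num) hg1
  have h2m : 2 ≤ 2 ^ m := by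
    calc 2 = 2 ^ 1 := (pow_one 2).symm
    _ ≤ 2 ^ m := Nat.pow_le_pow_right (by norm_num) (by omega)
  set q1 := 2 ^ g - 1 with hq1
  have hq1pos : 0 < q1 := by omega
  have hgeom : ∑ t ∈ Finset.range g, 2 ^ t = q1 := by
    have := geom_sum_mul_two_pow 1 g
    simp only [one_mul, pow_one] at this
    omega
  have hcard' : (univ.filter fun x : GF (2*m) => x ^ (2 ^ m - 1) = 1).card = 2 ^ m - 1 := by
    have h := card_Kf hm0 ζ hζ
    rw [Kf_eq hm0, Finset.card_insert_of_notMem (zero_not_mem_Kf' hm0)] at h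
    omega
  -- Eval 1 : the sum equals 1
  have hS1 : ∑ u ∈ univ.filter (fun x : GF (2*m) => x ^ 2 ^ m = x),
      (∑ j ∈ Finset.range r, (u ^ q1) ^ 2 ^ (i * j)) ^ q1 = 1 := by
    rw [Kf_eq hm0, Finset.sum_insert (zero_not_mem_Kf' hm0)]
    have hzero : (∑ j ∈ Finset.range r, ((0 : GF (2*m)) ^ q1) ^ 2 ^ (i * j)) ^ q1 = 0 := by
      rw [zero_pow hq1pos.ne']
      have hz : ∀ j ∈ Finset.range r, ((0 : GF (2*m)) ^ 2 ^ (i * j)) = 0 :=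
        fun j _ => zero_pow (by positivity)
      rw [Finset.sum_congr rfl hz, Finset.sum_const, smul_zero]
      exact zero_pow hq1pos.ne'
    rw [hzero, zero_add]
    have hone : ∀ u ∈ univ.filter (fun x : GF (2*m) => x ^ (2 ^ m - 1) = 1),
        (∑ j ∈ Finset.range r, (u ^ q1) ^ 2 ^ (i * j)) ^ q1 = 1 := by
      intro u hu
      have hu1 : u ^ (2 ^ m - 1) = 1 := (Finset.mem_filter.1 hu).2
      have hune : u ≠ 0 := by
        rintro rfl
        rw [zero_pow (by omega : 2 ^ m - 1 ≠ 0)] at hu1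
        exact zero_ne_one hu1
      have huK : u ^ 2 ^ m = u := by
        calc u ^ 2 ^ m = u ^ (2 ^ m - 1 + 1) := by congr 1; omega
        _ = u ^ (2 ^ m - 1) * u := pow_succ u _
        _ = u := by rw [hu1, one_mul]
      have hvK : (u ^ q1) ^ 2 ^ m = u ^ q1 := by
        rw [pow_right_comm, huK]
      set x := ∑ j ∈ Finset.range r, (u ^ q1) ^ 2 ^ (i * j) with hx
      have hxne : x ≠ 0 := hcon u huK hune
      have hxi : x ^ 2 ^ i = x := by
        rw [hx, sum_pow_two_pow]
        have hterm : ∀ j ∈ Finset.range r,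
            ((u ^ q1) ^ 2 ^ (i * j)) ^ 2 ^ i = (u ^ q1) ^ 2 ^ (i * (j + 1)) := by
          intro j _
          rw [← pow_mul, ← pow_add, Nat.mul_succ]
        rw [Finset.sum_congr rfl hterm]
        have hlast : (u ^ q1) ^ 2 ^ (i * r) = (u ^ q1) ^ 2 ^ (i * 0) := by
          have hir : i * r = m * i' := by rw [hii', hgr]; ring
          rw [hir, iter_pow hvK i', Nat.mul_zero, pow_zero, pow_one]
        have h1 := Finset.sum_range_succ (fun j => (u ^ q1) ^ 2 ^ (i * j)) r
        have h2 := Finset.sum_range_succ' (fun j => (u ^ q1) ^ 2 ^ (i * j)) r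
        have h3 : (∑ j ∈ Finset.range r, (u ^ q1) ^ 2 ^ (i * (j + 1)))
              + (u ^ q1) ^ 2 ^ (i * 0)
            = (∑ j ∈ Finset.range r, (u ^ q1) ^ 2 ^ (i * j)) + (u ^ q1) ^ 2 ^ (i * 0) := by
          rw [← h2, h1, hlast]
        exact add_right_cancel h3
      have hxm : x ^ 2 ^ m = x := by
        rw [hx, sum_pow_two_pow]
        apply Finset.sum_congr rfl
        intro j _
        rw [pow_right_comm, hvK]
      have hxg : x ^ 2 ^ g = x := pow_gcd_fix hab hxi hxm
      have hxq : x ^ q1 * x = 1 * x := by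
        rw [one_mul, ← pow_succ]
        have : q1 + 1 = 2 ^ g := by omega
        rw [this, hxg]
      exact mul_right_cancel₀ hxne hxq
    rw [Finset.sum_congr rfl hone, Finset.sum_const, hcard', nsmul_eq_mul, mul_one]
    have hodd : (2 ^ m - 1 : ℕ) = 2 * (2 ^ (m - 1) - 1) + 1 := by
      have h1 : 2 ^ m = 2 * 2 ^ (m - 1) := by
        rw [← pow_succ']
        congr 1
        omega
      omega
    rw [hodd]
    push_cast
    rw [CharTwo.two_eq_zero (R := GF (2*m))]
    ring
  -- Eval 2 : the sum equals 0
  have hS0 : ∑ u ∈ univ.filter (fun x : GF (2*m) => x ^ 2 ^ m = x),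
      (∑ j ∈ Finset.range r, (u ^ q1) ^ 2 ^ (i * j)) ^ q1 = 0 := by
    have hNEg : Nonempty (Fin g) := ⟨⟨0, by omega⟩⟩
    have hexp : ∀ u ∈ univ.filter (fun x : GF (2*m) => x ^ 2 ^ m = x),
        (∑ j ∈ Finset.range r, (u ^ q1) ^ 2 ^ (i * j)) ^ q1 =
        ∑ p ∈ Fintype.piFinset (fun _ : Fin g => Finset.range r),
          u ^ (q1 * ∑ t : Fin g, 2 ^ (i * p t + (t : ℕ))) := by
      intro u _
      set x := ∑ j ∈ Finset.range r, (u ^ q1) ^ 2 ^ (i * j) with hx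
      have hA : x ^ q1 = ∏ t : Fin g, x ^ 2 ^ (t : ℕ) := by
        rw [Fin.prod_univ_eq_prod_range (fun t => x ^ 2 ^ t) g,
          Finset.prod_pow_eq_pow_sum, hgeom]
      have hB : ∀ t : Fin g, x ^ 2 ^ (t : ℕ)
          = ∑ j ∈ Finset.range r, u ^ (q1 * 2 ^ (i * j + (t : ℕ))) := by
        intro t
        rw [hx, sum_pow_two_pow]
        apply Finset.sum_congr rfl
        intro j _
        rw [← pow_mul, ← pow_mul, ← pow_add]
      rw [hA, Finset.prod_congr rfl (fun t _ => hB t), Finset.prod_univ_sum]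
      apply Finset.sum_congr rfl
      intro p _
      rw [Finset.prod_pow_eq_pow_sum, ← Finset.mul_sum]
    rw [Finset.sum_congr rfl hexp, Finset.sum_comm]
    apply Finset.sum_eq_zero
    intro p hp
    have hpr : ∀ t : Fin g, p t < r := by
      intro t
      have := (Fintype.mem_piFinset.1 hp) t
      exact Finset.mem_range.1 this
    set Tp := ∑ t : Fin g, 2 ^ (i * p t + (t : ℕ)) with hTp
    have hTppos : 0 < Tp := by
      rw [hTp]
      apply Finset.sum_pos (fun t _ => by positivity)
      exact Finset.univ_nonempty
    apply sum_pow_eq_zero hm0 ζ hζ (by positivity)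
    -- the non-divisibility
    intro hdvd
    set p' : ℕ → ℕ := fun t => if ht : t < g then p ⟨t, ht⟩ else 0 with hp'
    set f : ℕ → ℕ := fun t => (i' * p' t) % r with hf
    have hfr : ∀ t, t < g → f t < r := fun t _ => Nat.mod_lt _ (by omega)
    have hTp' : Tp = ∑ t ∈ Finset.range g, 2 ^ (i * p' t + t) := by
      rw [hTp, ← Fin.sum_univ_eq_sum_range (fun t => 2 ^ (i * p' t + t)) g]
      apply Finset.sum_congr rfl
      intro t _
      have hpt : p' (t : ℕ) = p t := by
        rw [hp']
        simp only [Fin.is_lt, dif_pos, Fin.eta]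
      rw [hpt]
    have hmod : (q1 * Tp) ≡ q1 * ∑ t ∈ Finset.range g, 2 ^ (g * f t + t) [MOD 2 ^ m - 1] := by
      apply Nat.ModEq.mul_left
      rw [hTp']
      apply modeq_sum
      intro t ht
      have htg : t < g := Finset.mem_range.1 ht
      have hexpmod : (i * p' t + t) % m = g * f t + t := by
        rw [hf, hii']
        rw [hgr]
        exact exp_mod_eq g r i' t (p' t) (by omega) (by omega) htg
      calc (2:ℕ) ^ (i * p' t + t) ≡ 2 ^ ((i * p' t + t) % m) [MOD 2 ^ m - 1] :=
            two_pow_modeq m (by omega) _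
      _ = 2 ^ (g * f t + t) := by rw [hexpmod]
    have h0 : q1 * Tp ≡ 0 [MOD 2 ^ m - 1] := Nat.modEq_zero_iff_dvd.2 hdvd
    have h1 : q1 * ∑ t ∈ Finset.range g, 2 ^ (g * f t + t) ≡ 0 [MOD 2 ^ m - 1] :=
      (hmod.symm).trans h0
    have h2 : (2 ^ (g * r) - 1) ∣ (2 ^ g - 1) * ∑ t ∈ Finset.range g, 2 ^ (g * f t + t) := by
      rw [← hgr]
      exact Nat.modEq_zero_iff_dvd.1 h1
    exact key_not_dvd g r hg1 hr2 f hfr h2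
  rw [hS1] at hS0
  exact one_ne_zero hS0

lemma exists_w (hm2 : 2 ≤ m) (h : ℕ) (hpos : 0 < h) (hdvd : h ∣ m) :
    ∃ w : GF (2*m), w ^ 2 ^ h = w + 1 := by
  have h2h1 : 1 ≤ 2 ^ h := Nat.one_le_two_pow
  have hd1 : (2 ^ h - 1) * (2 ^ h + 1) = 2 ^ (2 * h) - 1 := by
    have h2h : 2 ^ (2 * h) = 2 ^ h * 2 ^ h := by rw [two_mul, pow_add]
    have h2 : 1 ≤ 2 ^ (2 * h) := Nat.one_le_two_pow
    zify [h2h1, h2]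
    have h2hz : ((2:ℤ)) ^ (2 * h) = 2 ^ h * 2 ^ h := by rw [two_mul, pow_add]
    rw [h2hz]
    ring
  have hdvd2 : (2 ^ h + 1) ∣ 2 ^ (2 * m) - 1 := by
    have hstep : (2 ^ (2 * h) - 1) ∣ 2 ^ (2 * m) - 1 :=
      two_pow_sub_one_dvd (mul_dvd_mul_left 2 hdvd)
    exact dvd_trans (Dvd.intro_left _ hd1) hstep
  obtain ⟨lu, hlu⟩ := exists_unit_order (m := m) (by omega)
    (show 0 < 2 ^ h + 1 by positivity) hdvd2
  have hl1 : ((lu : (GF (2*m))ˣ) : GF (2*m)) ^ (2 ^ h + 1) = 1 := by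
    have := pow_orderOf_eq_one lu
    rw [hlu] at this
    rw [← Units.val_pow_eq_pow_val, this, Units.val_one]
  set l : GF (2*m) := ((lu : (GF (2*m))ˣ) : GF (2*m)) with hldef
  have hlne0 : l ≠ 0 := Units.ne_zero _
  have hlne1 : l ≠ 1 := by
    intro h1
    have hu : lu = 1 := Units.ext (by rw [← hldef, h1, Units.val_one])
    rw [hu, orderOf_one] at hlu
    omega
  have hden : (1 : GF (2*m)) + l ≠ 0 := by
    intro h0
    apply hlne1
    have h1 : l = -1 := eq_neg_of_add_eq_zero_right h0
    rw [h1, CharTwo.neg_eq]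
  refine ⟨l * (1 + l)⁻¹, ?_⟩
  have hlh : l ^ 2 ^ h = l⁻¹ := by
    have hstep : l ^ 2 ^ h * l = 1 := by
      rw [← pow_succ, hl1]
    exact eq_inv_of_mul_eq_one_left hstep
  have hfr : ((1 : GF (2*m)) + l) ^ 2 ^ h = 1 + l ^ 2 ^ h := by
    rw [add_pow_char_pow, one_pow]
  rw [mul_pow, inv_pow, hfr, hlh]
  have hinv : (1 : GF (2*m)) + l⁻¹ = (1 + l) * l⁻¹ := by
    rw [add_mul, one_mul, mul_inv_cancel₀ hlne0, add_comm]
  rw [hinv]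
  calc l⁻¹ * ((1 + l) * l⁻¹)⁻¹ = l⁻¹ * ((l⁻¹)⁻¹ * (1 + l)⁻¹) := by
        rw [mul_inv_rev]
  _ = (1 + l)⁻¹ := by
        rw [inv_inv, ← mul_assoc, inv_mul_cancel₀ hlne0, one_mul]
  _ = (l + (1 + l)) * (1 + l)⁻¹ := by
        have hch : l + (1 + l) = 1 := by
          rw [add_comm 1 l, ← add_assoc, CharTwo.add_self_eq_zero, zero_add]
        rw [hch, one_mul]
  _ = l * (1 + l)⁻¹ + 1 := by
        rw [add_mul, mul_inv_cancel₀ hden]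

lemma w_iter {w : GF (2*m)} {h : ℕ} (hw : w ^ 2 ^ h = w + 1) (k : ℕ) :
    w ^ 2 ^ (h * k) = w + (if Even k then 0 else 1) := by
  induction k with
  | zero => simp
  | succ k ih =>
    have hsplit : 2 ^ (h * (k + 1)) = 2 ^ (h * k) * 2 ^ h := by
      rw [← pow_add, Nat.mul_succ]
    rw [hsplit, pow_mul, ih]
    by_cases hk : Even k
    · have hk1 : ¬ Even (k + 1) := by simp [Nat.even_add_one, hk]
      rw [if_pos hk, if_neg hk1, add_zero, hw]
    · have hk1 : Even (k + 1) := by simp [Nat.even_add_one, hk]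
      rw [if_neg hk, if_pos hk1, add_pow_char_pow, one_pow, hw, add_zero,
        add_assoc, CharTwo.add_self_eq_zero, add_zero]

lemma even_odd_split {β : Type*} [AddCommMonoid β] (f : ℕ → β) (s : ℕ) :
    ∑ k ∈ Finset.range (2 * s), f k = ∑ j ∈ Finset.range s, (f (2 * j) + f (2 * j + 1)) := by
  induction s with
  | zero => simp
  | succ s ih =>
    have h1 : 2 * (s + 1) = 2 * s + 1 + 1 := by ring
    rw [h1, Finset.sum_range_succ, Finset.sum_range_succ, ih, Finset.sum_range_succ, add_assoc]

lemma half_trace (hm2 : 2 ≤ m) (g r i i' s : ℕ) (hgr : m = g * r) (hii' : i = g * i')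
    (h2s : 2 * s = r + 1) {V : GF (2*m)} (hVK : V ^ 2 ^ m = V)
    (hTrV : ∑ j ∈ Finset.range r, V ^ 2 ^ (i * j) = 0) :
    ∃ A : GF (2*m), A ^ 2 ^ m = A ∧ A ^ 2 ^ i + A = V := by
  refine ⟨∑ j ∈ Finset.range s, V ^ 2 ^ (i * (2 * j)), ?_, ?_⟩
  · rw [sum_pow_two_pow]
    apply Finset.sum_congr rfl
    intro j _
    rw [pow_right_comm, hVK]
  · have hApow : (∑ j ∈ Finset.range s, V ^ 2 ^ (i * (2 * j))) ^ 2 ^ i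
        = ∑ j ∈ Finset.range s, V ^ 2 ^ (i * (2 * j + 1)) := by
      rw [sum_pow_two_pow]
      apply Finset.sum_congr rfl
      intro j _
      rw [← pow_mul, ← pow_add, Nat.mul_succ]
    rw [hApow, ← Finset.sum_add_distrib]
    have hcomb : ∀ j ∈ Finset.range s,
        V ^ 2 ^ (i * (2 * j + 1)) + V ^ 2 ^ (i * (2 * j))
          = ((fun k => V ^ 2 ^ (i * k)) (2 * j) + (fun k => V ^ 2 ^ (i * k)) (2 * j + 1)) := by
      intro j _
      simp only []
      rw [add_comm]
    rw [Finset.sum_congr rfl hcomb, ← even_odd_split (fun k => V ^ 2 ^ (i * k)) s, h2s,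
      Finset.sum_range_succ, hTrV, zero_add]
    have hir : i * r = m * i' := by rw [hii', hgr]; ring
    rw [hir, iter_pow hVK i']

end Stmt17Aux
/-- if `1 ≤ i ≤ m−1` and `v₂(m) < v₂(i)` then there exist
`a ∉ K_m` and `y ≠ 0` with `a^(2^i)·y^(2^(2i)) + (a+a^(2^m))^(2^i)·y^(2^(m+i)) + a·y = 0`. -/
theorem stmt17 (m : ℕ) (i : ℕ) (hi1 : 1 ≤ i) (hi2 : i ≤ m - 1)
    (hv : padicValNat 2 m < padicValNat 2 i) :
    ∃ a y : GF (2*m), a ^ 2 ^ m ≠ a ∧ y ≠ 0 ∧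
      a ^ 2 ^ i * y ^ 2 ^ (2*i) + (a + a ^ 2 ^ m) ^ 2 ^ i * y ^ 2 ^ (m + i)
        + a * y = 0 := by
  classical
  have hm2 : 2 ≤ m := by omega
  have him : i < m := by omega
  have hi0 : 0 < i := hi1
  set g := Nat.gcd i m with hg
  have hgi : g ∣ i := Nat.gcd_dvd_left i m
  have hgm : g ∣ m := Nat.gcd_dvd_right i m
  have hg1 : 1 ≤ g := Nat.gcd_pos_of_pos_left m hi0
  set r := m / g with hrdef
  have hgr : m = g * r := (Nat.mul_div_cancel' hgm).symm
  have hr0 : 0 < r := by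
    rcases Nat.eq_zero_or_pos r with h0 | h
    · rw [h0, Nat.mul_zero] at hgr; omega
    · exact h
  have hr2 : 2 ≤ r := by
    by_contra hlt
    have hr1 : r = 1 := by omega
    rw [hr1, Nat.mul_one] at hgr
    have : m ≤ i := Nat.le_of_dvd hi0 (hgr ▸ hgi)
    omega
  set i' := i / g with hi'def
  have hii' : i = g * i' := (Nat.mul_div_cancel' hgi).symm
  set e := padicValNat 2 m with he
  have hi_dvd : 2 ^ (e + 1) ∣ i :=
    dvd_trans (pow_dvd_pow 2 (by omega : e + 1 ≤ padicValNat 2 i)) pow_padicValNat_dvd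
  have hem : 2 ^ e ∣ m := by rw [he]; exact pow_padicValNat_dvd
  have hnot : ¬ 2 ^ (e + 1) ∣ m := by
    rw [he]; exact pow_succ_padicValNat_not_dvd (by omega)
  have hrodd : ¬ 2 ∣ r := by
    intro h2r
    apply hnot
    have hge : 2 ^ e ∣ g :=
      Nat.dvd_gcd (dvd_trans (pow_dvd_pow 2 (Nat.le_succ e)) hi_dvd) hem
    obtain ⟨g1, hg1'⟩ := hge
    obtain ⟨r1, hr1'⟩ := h2r
    exact ⟨g1 * r1, by rw [hgr, hg1', hr1', pow_succ]; ring⟩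
  -- the element w
  obtain ⟨w, hw⟩ := Stmt17Aux.exists_w hm2 (2 ^ e) (by positivity) hem
  have hwm : w ^ 2 ^ m = w + 1 := by
    have hiter := Stmt17Aux.w_iter hw (m / 2 ^ e)
    rw [Nat.mul_div_cancel' hem] at hiter
    have hoddm : ¬ Even (m / 2 ^ e) := by
      intro hev
      obtain ⟨c, hc⟩ := hev
      apply hnot
      refine ⟨c, ?_⟩
      calc m = 2 ^ e * (m / 2 ^ e) := (Nat.mul_div_cancel' hem).symm
      _ = 2 ^ e * (c + c) := by rw [hc]
      _ = 2 ^ (e + 1) * c := by rw [pow_succ]; ring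
    rw [hiter, if_neg hoddm]
  have hwi : w ^ 2 ^ i = w := by
    have heidvd : 2 ^ e ∣ i := dvd_trans (pow_dvd_pow 2 (Nat.le_succ e)) hi_dvd
    have hiter := Stmt17Aux.w_iter hw (i / 2 ^ e)
    rw [Nat.mul_div_cancel' heidvd] at hiter
    have heven : Even (i / 2 ^ e) := by
      obtain ⟨c, hc⟩ := hi_dvd
      refine ⟨c, ?_⟩
      have h2e0 : 0 < 2 ^ e := by positivity
      calc i / 2 ^ e = 2 ^ (e + 1) * c / 2 ^ e := by rw [hc]
      _ = 2 ^ e * (2 * c) / 2 ^ e := by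
          congr 1
          rw [pow_succ]
          ring
      _ = 2 * c := Nat.mul_div_cancel_left _ h2e0
      _ = c + c := by ring
    rw [hiter, if_pos heven, add_zero]
  -- the unit ζ of order 2^m - 1
  have h2m : 2 ≤ 2 ^ m := by
    calc 2 = 2 ^ 1 := (pow_one 2).symm
    _ ≤ 2 ^ m := Nat.pow_le_pow_right (by norm_num) (by omega)
  have hmdvd : (2 ^ m - 1) ∣ 2 ^ (2 * m) - 1 := Stmt17Aux.two_pow_sub_one_dvd ⟨2, by ring⟩
  obtain ⟨ζ, hζ⟩ := Stmt17Aux.exists_unit_order (m := m) (by omega) (by omega) hmdvd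
  -- Bezout
  obtain ⟨a0, b0, ha0pos, hab⟩ := Stmt17Aux.bezout_nat i m hi0 (by omega)
  rw [← hg] at hab
  -- the parity lemma
  obtain ⟨u, huK, hune, hTru⟩ := Stmt17Aux.exists_trace_zero hm2 g r i a0 b0 i' hgr hg1 hr2 hii' hab ζ hζ
  have hu1 : u ^ (2 ^ m - 1) = 1 := by
    have hstep : u ^ (2 ^ m - 1) * u = 1 * u := by
      rw [one_mul, ← pow_succ]
      have : 2 ^ m - 1 + 1 = 2 ^ m := by omega
      rw [this, huK]
    exact mul_right_cancel₀ hune hstep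
  -- the element z with z^(2^i - 1) = u^(2^g - 1)
  have h2i1 : 1 ≤ 2 ^ i := Nat.one_le_two_pow
  have h2g1 : 1 ≤ 2 ^ g := Nat.one_le_two_pow
  set XS := ∑ j ∈ Finset.range a0, 2 ^ (i * j) with hXS
  have hXgeom : XS * (2 ^ i - 1) = 2 ^ (i * a0) - 1 := Stmt17Aux.geom_sum_mul_two_pow i a0
  have hKgeom : (∑ j ∈ Finset.range b0, 2 ^ (m * j)) * (2 ^ m - 1) = 2 ^ (m * b0) - 1 :=
    Stmt17Aux.geom_sum_mul_two_pow m b0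
  have hXid : XS * (2 ^ i - 1) = (2 ^ g - 1) + (2 ^ g * ∑ j ∈ Finset.range b0, 2 ^ (m * j)) * (2 ^ m - 1) := by
    rw [hXgeom]
    have h1 : 2 ^ (i * a0) = 2 ^ g * 2 ^ (m * b0) := by
      rw [← pow_add]
      congr 1
      rw [Nat.mul_comm i a0, Nat.mul_comm m b0]
      omega
    have h2 : (2 ^ g * ∑ j ∈ Finset.range b0, 2 ^ (m * j)) * (2 ^ m - 1)
        = 2 ^ g * (2 ^ (m * b0) - 1) := by rw [mul_assoc, hKgeom]
    rw [h1, h2]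
    have h3 : 1 ≤ 2 ^ (m * b0) := Nat.one_le_two_pow
    have h4 : 1 ≤ 2 ^ g * 2 ^ (m * b0) := Nat.one_le_iff_ne_zero.2 (by positivity)
    zify [h2g1, h3, h4]
    ring
  set z := u ^ XS with hzdef
  have hzK : z ^ 2 ^ m = z := by rw [hzdef, pow_right_comm, huK]
  have hzne : z ≠ 0 := pow_ne_zero _ hune
  have hzw : z ^ (2 ^ i - 1) = u ^ (2 ^ g - 1) := by
    rw [hzdef, ← pow_mul, hXid, pow_add, mul_comm (2 ^ g * ∑ j ∈ Finset.range b0, 2 ^ (m * j)) (2 ^ m - 1), pow_mul, hu1, one_pow, mul_one]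
  -- V and the half trace A
  set V := z ^ ((2 ^ i - 1) * 2 ^ i) with hVdef
  have hVu : V = (u ^ (2 ^ g - 1)) ^ 2 ^ i := by rw [hVdef, pow_mul, hzw]
  have hVK : V ^ 2 ^ m = V := by rw [hVdef, pow_right_comm, hzK]
  have hTrV : ∑ j ∈ Finset.range r, V ^ 2 ^ (i * j) = 0 := by
    have hterm : ∀ j ∈ Finset.range r, V ^ 2 ^ (i * j)
        = ((u ^ (2 ^ g - 1)) ^ 2 ^ (i * j)) ^ 2 ^ i := by
      intro j _
      rw [hVu, pow_right_comm]
    rw [Finset.sum_congr rfl hterm, ← Stmt17Aux.sum_pow_two_pow, hTru]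
    exact zero_pow (by positivity)
  set s := (r + 1) / 2 with hsdef
  have h2s : 2 * s = r + 1 := by
    have : r % 2 = 1 := by omega
    omega
  obtain ⟨A, hAK, hAV⟩ := Stmt17Aux.half_trace hm2 g r i i' s hgr hii' h2s hVK hTrV
  have hAi : A ^ 2 ^ i = V + A := by
    calc A ^ 2 ^ i = A ^ 2 ^ i + (A + A) := by rw [CharTwo.add_self_eq_zero, add_zero]
    _ = (A ^ 2 ^ i + A) + A := by ring
    _ = V + A := by rw [hAV]
  -- assembly
  set β := z ^ (2 ^ i + 1) with hβdef
  have hβm : β ^ 2 ^ m = β := by rw [hβdef, pow_right_comm, hzK]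
  have hβne : β ≠ 0 := pow_ne_zero _ hzne
  refine ⟨β * (A + w), z⁻¹, ?_, inv_ne_zero hzne, ?_⟩
  · rw [mul_pow, hβm, add_pow_char_pow, hAK, hwm]
    intro hcontr
    apply hβne
    have h1 : β * (A + w) + β = β * (A + w) + 0 := by
      calc β * (A + w) + β = β * (A + (w + 1)) := by ring
      _ = β * (A + w) + 0 := by rw [add_zero]; exact hcontr
    have := add_left_cancel h1
    exact this
  · have ham : (β * (A + w)) ^ 2 ^ m = β * (A + w) + β := by
      rw [mul_pow, hβm, add_pow_char_pow, hAK, hwm]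
      ring
    have hb : β * (A + w) + (β * (A + w)) ^ 2 ^ m = β := by
      rw [ham, ← add_assoc, CharTwo.add_self_eq_zero, zero_add]
    rw [hb]
    have hXX0 : z ^ (2 ^ i * 2 ^ i) ≠ 0 := pow_ne_zero _ hzne
    have hXi0 : z ^ (2 ^ i : ℕ) ≠ 0 := pow_ne_zero _ hzne
    rw [show (2:ℕ) ^ (2 * i) = 2 ^ i * 2 ^ i by rw [← pow_add, two_mul]]
    have hmi : (z⁻¹) ^ ((2:ℕ) ^ (m + i)) = (z ^ (2 ^ i : ℕ))⁻¹ := by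
      rw [inv_pow]
      congr 1
      rw [pow_add, pow_mul, hzK]
    rw [hmi, inv_pow z (2 ^ i * 2 ^ i)]
    -- clear denominators
    suffices hfin : ((β * (A + w)) ^ 2 ^ i * (z ^ (2 ^ i * 2 ^ i))⁻¹
        + β ^ 2 ^ i * (z ^ (2 ^ i : ℕ))⁻¹ + β * (A + w) * z⁻¹) * z ^ (2 ^ i * 2 ^ i) = 0 by
      rcases mul_eq_zero.1 hfin with hc | hc
      · exact hc
      · exact absurd hc hXX0
    have hsplit1 : z ^ (2 ^ i * 2 ^ i) = z ^ (2 ^ i : ℕ) * V := by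
      have hexp : 2 ^ i * 2 ^ i = 2 ^ i + (2 ^ i - 1) * 2 ^ i := by zify [h2i1]; ring
      rw [hVdef, hexp, pow_add]
    have hsplit2 : z ^ (2 ^ i * 2 ^ i) = z * β ^ (2 ^ i - 1) := by
      have hexp : 2 ^ i * 2 ^ i = 1 + (2 ^ i + 1) * (2 ^ i - 1) := by zify [h2i1]; ring
      rw [hβdef, ← pow_mul z (2 ^ i + 1) (2 ^ i - 1), hexp, pow_add, pow_one]
    have e1 : (β * (A + w)) ^ 2 ^ i * (z ^ (2 ^ i * 2 ^ i))⁻¹ * z ^ (2 ^ i * 2 ^ i)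
        = (β * (A + w)) ^ 2 ^ i := by
      rw [mul_assoc, inv_mul_cancel₀ hXX0, mul_one]
    have e2 : β ^ 2 ^ i * (z ^ (2 ^ i : ℕ))⁻¹ * z ^ (2 ^ i * 2 ^ i) = β ^ 2 ^ i * V := by
      rw [hsplit1, mul_assoc, ← mul_assoc (z ^ (2 ^ i : ℕ))⁻¹, inv_mul_cancel₀ hXi0, one_mul]
    have e3 : β * (A + w) * z⁻¹ * z ^ (2 ^ i * 2 ^ i) = β * (A + w) * β ^ (2 ^ i - 1) := by
      rw [hsplit2, mul_assoc, ← mul_assoc z⁻¹, inv_mul_cancel₀ hzne, one_mul]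
    rw [add_mul, add_mul, e1, e2, e3]
    have haaX : (β * (A + w)) ^ 2 ^ i = β ^ 2 ^ i * ((V + A) + w) := by
      rw [mul_pow, add_pow_char_pow, hAi, hwi]
    have haaβ : β * (A + w) * β ^ (2 ^ i - 1) = β ^ 2 ^ i * (A + w) := by
      rw [mul_comm β (A + w), mul_assoc, ← pow_succ']
      have hsucc : 2 ^ i - 1 + 1 = 2 ^ i := by omega
      rw [hsucc]
      ring
    rw [haaX, haaβ]
    have hchar : ((V + A) + w) + V + (A + w) = 0 := by
      have h1 := CharTwo.add_self_eq_zero (R := GF (2*m)) V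
      have h2 := CharTwo.add_self_eq_zero (R := GF (2*m)) A
      have h3 := CharTwo.add_self_eq_zero (R := GF (2*m)) w
      linear_combination h1 + h2 + h3
    calc β ^ 2 ^ i * ((V + A) + w) + β ^ 2 ^ i * V + β ^ 2 ^ i * (A + w)
        = β ^ 2 ^ i * (((V + A) + w) + V + (A + w)) := by ring
    _ = 0 := by rw [hchar, mul_zero]
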